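/- Let G be a finite abelian group and H a cancellative monoid admitting a transfer homomorphism θ: H → B(G) to the monoid of zero-sum sequences over G. Then H is half-factorial (every element has a unique factorization length) if and only if |G| ≤ 2. -/

import Mathlib

/-- The monoid of zero-sum sequences over an abelian group `G`, realized as the submonoid of
the (multiplicatively written) free abelian monoid `Multiplicative (Multiset G)` consisting
of sequences with sum zero. -/
def ZeroSumMonoid (G : Type*) [AddCommGroup G] : Submonoid (Multiplicative (Multiset G)) where
  carrier := {s | (Multiplicative.toAdd s).sum = 0}
  one_mem' := by simp
  mul_mem' := by
    intro a b ha hb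
    simp only [Set.mem_setOf_eq, toAdd_mul, Multiset.sum_add] at *
    rw [ha, hb, add_zero]

/-- The set of lengths of `a`: all `n` such that `a = ε·u₁⋯u_n` with `ε` a unit and the
`uᵢ` atoms (irreducibles). -/
def LengthSet {M : Type*} [Monoid M] (a : M) : Set ℕ :=
  {n | ∃ (ε : Mˣ) (L : List M), L.length = n ∧ (∀ x ∈ L, Irreducible x) ∧ a = ε * L.prod}

namespace ZS

open scoped Classical

variable {G : Type*} [AddCommGroup G]

/-- underlying multiset -/
def m (s : ZeroSumMonoid G) : Multiset G := Multiplicative.toAdd s.val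

lemma m_mul (s t : ZeroSumMonoid G) : m (s * t) = m s + m t := rfl

lemma m_one : m (1 : ZeroSumMonoid G) = 0 := rfl

lemma m_sum (s : ZeroSumMonoid G) : (m s).sum = 0 := s.2

lemma mext {s t : ZeroSumMonoid G} (h : m s = m t) : s = t :=
  Subtype.ext (Multiplicative.toAdd.injective h)

def mk (s : Multiset G) (h : s.sum = 0) : ZeroSumMonoid G := ⟨Multiplicative.ofAdd s, h⟩

lemma m_mk (s : Multiset G) (h : s.sum = 0) : m (mk s h) = s := rfl

lemma eq_one_of_m_eq_zero {s : ZeroSumMonoid G} (h : m s = 0) : s = 1 := mext (by simp [h, m_one])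

lemma isUnit_iff {s : ZeroSumMonoid G} : IsUnit s ↔ s = 1 := by
  constructor
  · rintro ⟨u, rfl⟩
    have h : m (u.val * u.inv) = m 1 := by rw [u.val_inv, m_one] 
    rw [m_mul, m_one] at h
    have h1 : Multiset.card (m u.val) = 0 := by
      have := congrArg Multiset.card h
      rw [Multiset.card_add, Multiset.card_zero] at this
      omega
    exact eq_one_of_m_eq_zero (Multiset.card_eq_zero.mp h1)
  · rintro rfl; exact isUnit_one


lemma unit_eq_one (u : (ZeroSumMonoid G)ˣ) : (u : ZeroSumMonoid G) = 1 :=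
  isUnit_iff.mp u.isUnit

lemma mem_lengthSet {s : ZeroSumMonoid G} {n : ℕ} :
    n ∈ LengthSet s ↔ ∃ L : List (ZeroSumMonoid G),
      L.length = n ∧ (∀ x ∈ L, Irreducible x) ∧ s = L.prod := by
  constructor
  · rintro ⟨ε, L, h1, h2, h3⟩
    exact ⟨L, h1, h2, by rwa [unit_eq_one ε, one_mul] at h3⟩
  · rintro ⟨L, h1, h2, h3⟩
    exact ⟨1, L, h1, h2, by rwa [Units.val_one, one_mul]⟩

/-- the weight: card + number of zeros. -/
noncomputable def w (s : ZeroSumMonoid G) : ℕ :=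
  Multiset.card (m s) + (m s).count 0

lemma w_mul (s t : ZeroSumMonoid G) : w (s * t) = w s + w t := by
  unfold w
  rw [m_mul, Multiset.card_add, Multiset.count_add]
  omega

lemma w_one : w (1 : ZeroSumMonoid G) = 0 := by simp [w, m_one]

lemma w_prod (L : List (ZeroSumMonoid G)) : w L.prod = (L.map w).sum := by
  induction L with
  | nil => simpa using w_one
  | cons a L ih => rw [List.prod_cons, w_mul, ih, List.map_cons, List.sum_cons]

section Small

variable [Fintype G] (hcard : Fintype.card G ≤ 2)
include hcard

lemma nonzero_unique {x y : G} (hx : x ≠ 0) (hy : y ≠ 0) : x = y := by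
  by_contra hxy
  have h3 : ({0, x, y} : Finset G).card = 3 := by
    rw [Finset.card_insert_of_notMem (by simp [Ne.symm hx, Ne.symm hy]),
      Finset.card_insert_of_notMem (by simp [hxy])]
    simp
  have h4 := Finset.card_le_univ ({0, x, y} : Finset G)
  rw [h3] at h4
  omega

lemma atom_w {s : ZeroSumMonoid G} (hs : Irreducible s) : w s = 2 := by
  by_cases h0 : (0 : G) ∈ m s
  · -- s = {0} * s'
    have hs' : ((m s).erase 0).sum = 0 := by
      have h1 := Multiset.cons_erase h0
      have h2 := m_sum s
      rw [← h1, Multiset.sum_cons, zero_add] at h2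
      exact h2
    have hsplit : s = mk {0} (by simp) * mk ((m s).erase 0) hs' := by
      apply mext
      rw [m_mul, m_mk, m_mk, Multiset.singleton_add, Multiset.cons_erase h0]
    rcases hs.isUnit_or_isUnit hsplit with h | h
    · exfalso
      have hc := congrArg m (isUnit_iff.mp h)
      rw [m_mk, m_one] at hc
      exact Multiset.singleton_ne_zero 0 hc
    · have ht1 := isUnit_iff.mp h
      rw [hsplit, ht1, mul_one]
      simp [w, m_mk]
  · -- all elements nonzero, hence all equal to some g with g + g = 0
    have hne : m s ≠ 0 := by
      intro hc
      exact hs.not_isUnit (isUnit_iff.mpr (eq_one_of_m_eq_zero hc))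
    obtain ⟨g, hg⟩ := Multiset.exists_mem_of_ne_zero hne
    have hgne : g ≠ 0 := fun hc => h0 (hc ▸ hg)
    have hall : ∀ b ∈ m s, b = g := fun b hb =>
      nonzero_unique hcard (fun hc => h0 (hc ▸ hb)) hgne
    have hrep : m s = Multiset.replicate (Multiset.card (m s)) g :=
      Multiset.eq_replicate_card.mpr hall
    have hgg : g + g = 0 := by
      by_contra hc
      have h2 := nonzero_unique hcard hc hgne
      exact hgne (add_eq_left.mp h2)
    set n := Multiset.card (m s) with hn
    have hn0 : n ≠ 0 := fun hc => hne (Multiset.card_eq_zero.mp hc)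
    have hn1 : n ≠ 1 := by
      intro hc
      have h2 := m_sum s
      rw [hrep, hc, Multiset.sum_replicate, one_smul] at h2
      exact hgne h2
    have h2g : (2 : ℕ) • g = 0 := by rw [two_smul]; exact hgg
    have hsum2 : (Multiset.replicate 2 g).sum = 0 := by
      rw [Multiset.sum_replicate]; exact h2g
    have hsum' : (Multiset.replicate (n - 2) g).sum = 0 := by
      rw [Multiset.sum_replicate]
      have hng : n • g = 0 := by
        have h2 := m_sum s
        rwa [hrep, Multiset.sum_replicate] at h2
      have h3 : (n - 2 + 2) • g = 0 := by rwa [Nat.sub_add_cancel (by omega)]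
      rwa [add_nsmul, h2g, add_zero] at h3
    have hsplit : s = mk (Multiset.replicate 2 g) hsum2 * mk _ hsum' := by
      apply mext
      rw [m_mul, m_mk, m_mk, ← Multiset.replicate_add]
      rw [Nat.add_sub_cancel' (by omega : 2 ≤ n)]
      exact hrep
    rcases hs.isUnit_or_isUnit hsplit with h | h
    · exfalso
      have hc := congrArg m (isUnit_iff.mp h)
      rw [m_mk, m_one] at hc
      have := congrArg Multiset.card hc
      simp at this
    · have ht1 := isUnit_iff.mp h
      rw [hsplit, ht1, mul_one]
      simp [w, m_mk, Multiset.count_replicate, Ne.symm hgne]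

end Small

lemma m_prod (L : List (ZeroSumMonoid G)) : m L.prod = (L.map m).sum := by
  induction L with
  | nil => simp [m_one]
  | cons a L ih => rw [List.prod_cons, m_mul, ih, List.map_cons, List.sum_cons]

lemma zero_mem_of_card_one {p : ZeroSumMonoid G} (h : Multiset.card (m p) = 1) :
    (0 : G) ∈ m p := by
  obtain ⟨x, hx⟩ := Multiset.card_eq_one.mp h
  have := m_sum p
  rw [hx, Multiset.sum_singleton] at this
  rw [hx, this]
  exact Multiset.mem_singleton_self 0

lemma not_unit_of_card {p : ZeroSumMonoid G} (h : Multiset.card (m p) ≠ 0) : ¬IsUnit p := by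
  intro hc
  apply h
  rw [isUnit_iff.mp hc, m_one, Multiset.card_zero]

/-- small zero-sum sequences (length ≤ 3) avoiding 0 are irreducible -/
lemma irred_small {t : Multiset G} (ht : t.sum = 0) (h0 : (0 : G) ∉ t)
    (hc : Multiset.card t ≠ 0) (hc3 : Multiset.card t ≤ 3) : Irreducible (mk t ht) := by
  constructor
  · exact not_unit_of_card (by rwa [m_mk])
  · intro a b hab
    have hm : m a + m b = t := by
      have := congrArg m hab
      rw [m_mk, m_mul] at this
      exact this.symm
    have hcards : Multiset.card (m a) + Multiset.card (m b) = Multiset.card t := by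
      rw [← hm, Multiset.card_add]
    rcases Nat.eq_zero_or_pos (Multiset.card (m a)) with ha | ha
    · exact Or.inl (isUnit_iff.mpr (eq_one_of_m_eq_zero (Multiset.card_eq_zero.mp ha)))
    rcases Nat.eq_zero_or_pos (Multiset.card (m b)) with hb | hb
    · exact Or.inr (isUnit_iff.mpr (eq_one_of_m_eq_zero (Multiset.card_eq_zero.mp hb)))
    exfalso
    have hone : Multiset.card (m a) = 1 ∨ Multiset.card (m b) = 1 := by omega
    rcases hone with h1 | h1
    · exact h0 (hm ▸ Multiset.mem_add.mpr (Or.inl (zero_mem_of_card_one h1)))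
    · exact h0 (hm ▸ Multiset.mem_add.mpr (Or.inr (zero_mem_of_card_one h1)))

lemma irred_zero_atom : Irreducible (mk ({0} : Multiset G) (by simp)) := by
  constructor
  · exact not_unit_of_card (by rw [m_mk]; simp)
  · intro a b hab
    have hm : m a + m b = {0} := by
      have := congrArg m hab
      rw [m_mk, m_mul] at this
      exact this.symm
    have hcards : Multiset.card (m a) + Multiset.card (m b) = 1 := by
      rw [← Multiset.card_add, hm, Multiset.card_singleton]
    rcases Nat.eq_zero_or_pos (Multiset.card (m a)) with ha | ha
    · exact Or.inl (isUnit_iff.mpr (eq_one_of_m_eq_zero (Multiset.card_eq_zero.mp ha)))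
    · exact Or.inr (isUnit_iff.mpr (eq_one_of_m_eq_zero (Multiset.card_eq_zero.mp
        (by omega))))

section Exists

variable [Fintype G] (hcard : Fintype.card G ≤ 2)
include hcard

lemma exists_factorization (s : ZeroSumMonoid G) :
    ∃ L : List (ZeroSumMonoid G), (∀ x ∈ L, Irreducible x) ∧ s = L.prod := by
  generalize hN : Multiset.card (m s) = N
  induction N using Nat.strong_induction_on generalizing s with
  | _ N ih =>
  by_cases hz : m s = 0
  · exact ⟨[], by simp, by rw [eq_one_of_m_eq_zero hz]; simp⟩
  by_cases h0 : (0 : G) ∈ m s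
  · have hs' : ((m s).erase 0).sum = 0 := by
      have h1 := Multiset.cons_erase h0
      have h2 := m_sum s
      rw [← h1, Multiset.sum_cons, zero_add] at h2
      exact h2
    have hsplit : s = mk {0} (by simp) * mk ((m s).erase 0) hs' := by
      apply mext
      rw [m_mul, m_mk, m_mk, Multiset.singleton_add, Multiset.cons_erase h0]
    have hlt : Multiset.card ((m s).erase 0) < N := by
      rw [Multiset.card_erase_of_mem h0, ← hN]
      exact Nat.pred_lt (by rw [hN]; intro hc; exact hz (Multiset.card_eq_zero.mp (hN ▸ hc)))
    obtain ⟨L, hL1, hL2⟩ := ih _ hlt (mk ((m s).erase 0) hs') (by rw [m_mk])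
    refine ⟨mk {0} (by simp) :: L, ?_, ?_⟩
    · intro x hx
      rcases List.mem_cons.mp hx with h | h
      · rw [h]; exact irred_zero_atom
      · exact hL1 x h
    · rw [List.prod_cons, ← hL2, ← hsplit]
  · -- no zeros: all elements equal some g with g + g = 0
    obtain ⟨g, hg⟩ := Multiset.exists_mem_of_ne_zero hz
    have hgne : g ≠ 0 := fun hc => h0 (hc ▸ hg)
    have hall : ∀ b ∈ m s, b = g := fun b hb =>
      nonzero_unique hcard (fun hc => h0 (hc ▸ hb)) hgne
    have hrep : m s = Multiset.replicate (Multiset.card (m s)) g :=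
      Multiset.eq_replicate_card.mpr hall
    have hgg : g + g = 0 := by
      by_contra hc
      have h2 := nonzero_unique hcard hc hgne
      exact hgne (add_eq_left.mp h2)
    have hn0 : Multiset.card (m s) ≠ 0 := fun hc => hz (Multiset.card_eq_zero.mp hc)
    have hn1 : Multiset.card (m s) ≠ 1 := by
      intro hc
      have h2 := m_sum s
      rw [hrep, hc, Multiset.sum_replicate, one_smul] at h2
      exact hgne h2
    have h2g : (2 : ℕ) • g = 0 := by rw [two_smul]; exact hgg
    have hsum2 : (Multiset.replicate 2 g).sum = 0 := by
      rw [Multiset.sum_replicate]; exact h2g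
    have hsum' : (Multiset.replicate (Multiset.card (m s) - 2) g).sum = 0 := by
      rw [Multiset.sum_replicate]
      have hng : Multiset.card (m s) • g = 0 := by
        have h2 := m_sum s
        rwa [hrep, Multiset.sum_replicate] at h2
      have h3 : (Multiset.card (m s) - 2 + 2) • g = 0 := by
        rwa [Nat.sub_add_cancel (by omega)]
      rwa [add_nsmul, h2g, add_zero] at h3
    have hsplit : s = mk (Multiset.replicate 2 g) hsum2 * mk _ hsum' := by
      apply mext
      rw [m_mul, m_mk, m_mk, ← Multiset.replicate_add]
      rw [Nat.add_sub_cancel' (by omega : 2 ≤ Multiset.card (m s))]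
      exact hrep
    have hlt : Multiset.card (Multiset.replicate (Multiset.card (m s) - 2) g) < N := by
      rw [Multiset.card_replicate]
      omega
    obtain ⟨L, hL1, hL2⟩ := ih _ hlt (mk _ hsum') (by rw [m_mk])
    have hirr2 : Irreducible (mk (Multiset.replicate 2 g) hsum2) := by
      apply irred_small
      · rw [Multiset.mem_replicate]
        rintro ⟨-, hc⟩
        exact hgne hc.symm
      · simp
      · simp
    refine ⟨mk (Multiset.replicate 2 g) hsum2 :: L, ?_, ?_⟩
    · intro x hx
      rcases List.mem_cons.mp hx with h | h
      · rw [h]; exact hirr2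
      · exact hL1 x h
    · rw [List.prod_cons, ← hL2, ← hsplit]

lemma w_prod_irr {L : List (ZeroSumMonoid G)} (h : ∀ x ∈ L, Irreducible x) :
    w L.prod = 2 * L.length := by
  induction L with
  | nil => simpa using w_one
  | cons a L ih =>
    rw [List.prod_cons, w_mul, atom_w hcard (h a (List.mem_cons_self)),
      ih (fun x hx => h x (List.mem_cons_of_mem a hx)), List.length_cons]
    ring

lemma B_half_factorial (s : ZeroSumMonoid G) : ∃ n : ℕ, LengthSet s = {n} := by
  obtain ⟨L, hL1, hL2⟩ := exists_factorization hcard s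
  refine ⟨L.length, Set.ext fun k => ?_⟩
  simp only [Set.mem_singleton_iff]
  constructor
  · intro hk
    obtain ⟨L', h1, h2, h3⟩ := mem_lengthSet.mp hk
    have e1 : w s = 2 * L'.length := by rw [h3]; exact w_prod_irr hcard h2
    have e2 : w s = 2 * L.length := by rw [hL2]; exact w_prod_irr hcard hL1
    omega
  · rintro rfl
    exact mem_lengthSet.mpr ⟨L, rfl, hL1, hL2⟩

end Exists

section Big

variable [Fintype G]

lemma irred_replicate_orderOf {g : G} (hg : g ≠ 0) {n : ℕ} (hn : n = addOrderOf g)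
    (h : (Multiset.replicate n g).sum = 0) :
    Irreducible (mk (Multiset.replicate n g) h) := by
  subst hn
  have hpos : 0 < addOrderOf g := addOrderOf_pos g
  constructor
  · exact not_unit_of_card (by rw [m_mk, Multiset.card_replicate]; omega)
  · intro a b hab
    have hm : m a + m b = Multiset.replicate (addOrderOf g) g := by
      have := congrArg m hab
      rw [m_mk, m_mul] at this
      exact this.symm
    have hle : m a ≤ Multiset.replicate (addOrderOf g) g := hm ▸ Multiset.le_add_right _ _
    have hrep : m a = Multiset.replicate (Multiset.card (m a)) g :=
      Multiset.eq_replicate_card.mpr fun x hx =>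
        Multiset.eq_of_mem_replicate (Multiset.mem_of_le hle hx)
    have hdvd : addOrderOf g ∣ Multiset.card (m a) := by
      rw [addOrderOf_dvd_iff_nsmul_eq_zero]
      have := m_sum a
      rwa [hrep, Multiset.sum_replicate] at this
    have hcards : Multiset.card (m a) + Multiset.card (m b) = addOrderOf g := by
      rw [← Multiset.card_add, hm, Multiset.card_replicate]
    rcases Nat.eq_zero_or_pos (Multiset.card (m a)) with ha | ha
    · exact Or.inl (isUnit_iff.mpr (eq_one_of_m_eq_zero (Multiset.card_eq_zero.mp ha)))
    · have hge : addOrderOf g ≤ Multiset.card (m a) := Nat.le_of_dvd ha hdvd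
      have hb0 : Multiset.card (m b) = 0 := by omega
      exact Or.inr (isUnit_iff.mpr (eq_one_of_m_eq_zero (Multiset.card_eq_zero.mp hb0)))

lemma B_not_HF (hcard : 2 < Fintype.card G) :
    ∃ (s : ZeroSumMonoid G) (n₁ n₂ : ℕ), n₁ ≠ n₂ ∧ n₁ ∈ LengthSet s ∧ n₂ ∈ LengthSet s := by
  by_cases hexp : ∀ x : G, x + x = 0
  · -- exponent 2 case: pick distinct nonzero g, h, set k = g + h
    have hcard' : 2 ≤ (Finset.univ.erase (0 : G)).card := by
      rw [Finset.card_erase_of_mem (Finset.mem_univ 0), Finset.card_univ]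
      omega
    obtain ⟨g, hgmem, h, hhmem, hgh⟩ := Finset.one_lt_card.mp (lt_of_lt_of_le one_lt_two hcard')
    have hg : g ≠ 0 := Finset.ne_of_mem_erase hgmem
    have hh : h ≠ 0 := Finset.ne_of_mem_erase hhmem
    set k := g + h with hk
    have hkne : k ≠ 0 := by
      intro hc
      apply hgh
      have : g = -h := by rw [eq_neg_iff_add_eq_zero]; exact hc
      rw [this, neg_eq_iff_add_eq_zero]
      exact hexp h
    have hUsum : (g ::ₘ h ::ₘ {k} : Multiset G).sum = 0 := by
      simp only [Multiset.sum_cons, Multiset.sum_singleton]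
      rw [← add_assoc, ← hk]
      exact hexp k
    have hVsum : ∀ x : G, (x ::ₘ {x} : Multiset G).sum = 0 := by
      intro x
      simp only [Multiset.sum_cons, Multiset.sum_singleton]
      exact hexp x
    set U := mk (g ::ₘ h ::ₘ {k}) hUsum with hU
    have hUirr : Irreducible U := by
      apply irred_small
      · simp only [Multiset.mem_cons, Multiset.mem_singleton]
        push_neg
        exact ⟨Ne.symm hg, Ne.symm hh, Ne.symm hkne⟩
      · simp
      · simp
    have hVirr : ∀ x : G, x ≠ 0 → Irreducible (mk (x ::ₘ {x}) (hVsum x)) := by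
      intro x hx
      apply irred_small
      · simp only [Multiset.mem_cons, Multiset.mem_singleton]
        push_neg
        exact ⟨Ne.symm hx, Ne.symm hx⟩
      · simp
      · simp
    refine ⟨U * U, 2, 3, by omega, ?_, ?_⟩
    · exact mem_lengthSet.mpr ⟨[U, U], rfl, by
        intro x hx
        simp only [List.mem_cons, List.not_mem_nil, or_false] at hx
        rcases hx with rfl | rfl <;> exact hUirr, by simp⟩
    · refine mem_lengthSet.mpr ⟨[mk (g ::ₘ {g}) (hVsum g), mk (h ::ₘ {h}) (hVsum h),
        mk (k ::ₘ {k}) (hVsum k)], rfl, ?_, ?_⟩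
      · intro x hx
        simp only [List.mem_cons, List.not_mem_nil, or_false] at hx
        rcases hx with rfl | rfl | rfl
        · exact hVirr g hg
        · exact hVirr h hh
        · exact hVirr k hkne
      · apply mext
        rw [m_mul]
        simp only [List.prod_cons, List.prod_nil, mul_one, m_mul, m_mk, hU]
        ext x
        simp only [Multiset.count_add, Multiset.count_cons, Multiset.count_singleton]
        split_ifs with h1 h2 h3 <;> omega
  · -- element of order ≥ 3
    push_neg at hexp
    obtain ⟨g, hgg⟩ := hexp
    have hg : g ≠ 0 := by rintro rfl; exact hgg (add_zero 0)
    set n := addOrderOf g with hn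
    have hpos : 0 < n := addOrderOf_pos g
    have hn1 : n ≠ 1 := by
      intro hc
      exact hg (by simpa using (hn ▸ hc : addOrderOf g = 1))
    have hn2 : n ≠ 2 := by
      intro hc
      apply hgg
      have := addOrderOf_nsmul_eq_zero g
      rw [← hn, hc, two_smul] at this
      exact this
    have hn3 : 3 ≤ n := by omega
    have hAsum : (Multiset.replicate n g).sum = 0 := by
      rw [Multiset.sum_replicate, hn]
      exact addOrderOf_nsmul_eq_zero g
    have hBsum : (Multiset.replicate n (-g)).sum = 0 := by
      rw [Multiset.sum_replicate, smul_neg, hn, addOrderOf_nsmul_eq_zero g, neg_zero]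
    have hCsum : (g ::ₘ {-g} : Multiset G).sum = 0 := by
      simp
    set A := mk (Multiset.replicate n g) hAsum with hA
    set Bb := mk (Multiset.replicate n (-g)) hBsum with hB
    set C := mk (g ::ₘ {-g}) hCsum with hC
    have hAirr : Irreducible A := irred_replicate_orderOf hg hn hAsum
    have hBirr : Irreducible Bb := by
      exact irred_replicate_orderOf (g := -g) (neg_ne_zero.mpr hg)
        (by rw [hn, addOrderOf_neg]) hBsum
    have hCirr : Irreducible C := by
      apply irred_small
      · simp only [Multiset.mem_cons, Multiset.mem_singleton]
        push_neg
        exact ⟨Ne.symm hg, Ne.symm (neg_ne_zero.mpr hg)⟩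
      · simp
      · simp
    refine ⟨A * Bb, 2, n, fun hc => hn2 hc.symm, ?_, ?_⟩
    · exact mem_lengthSet.mpr ⟨[A, Bb], rfl, by
        intro x hx
        simp only [List.mem_cons, List.not_mem_nil, or_false] at hx
        rcases hx with rfl | rfl
        · exact hAirr
        · exact hBirr, by simp⟩
    · refine mem_lengthSet.mpr ⟨List.replicate n C, List.length_replicate, ?_, ?_⟩
      · intro x hx
        rw [List.eq_of_mem_replicate hx]
        exact hCirr
      · apply mext
        rw [m_prod, List.map_replicate, List.sum_replicate, m_mul, m_mk, m_mk, m_mk]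
        have key : ∀ (a b : G) (k : ℕ),
            Multiset.replicate k a + Multiset.replicate k b = k • (a ::ₘ {b}) := by
          intro a b k
          induction k with
          | zero => simp
          | succ k ih =>
            rw [succ_nsmul, ← ih, Multiset.replicate_succ, Multiset.replicate_succ,
              ← Multiset.singleton_add a, ← Multiset.singleton_add b,
              ← Multiset.singleton_add a ({b} : Multiset G)]
            abel
        exact key g (-g) n

end Big

section Transfer

variable {H : Type*} [CancelMonoid H] (θ : H →* ZeroSumMonoid G)
  (hker : ∀ a : H, θ a = 1 ↔ IsUnit a)

include hker

lemma theta_unit {a : H} (h : IsUnit a) : θ a = 1 := (hker a).mpr h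

lemma irred_of_theta {a : H} (h : Irreducible (θ a)) : Irreducible a := by
  constructor
  · intro hc
    exact h.not_isUnit (by rw [theta_unit θ hker hc]; exact isUnit_one)
  · intro b c hbc
    have : θ a = θ b * θ c := by rw [hbc, map_mul]
    rcases h.isUnit_or_isUnit this with hu | hu
    · exact Or.inl ((hker b).mp (isUnit_iff.mp hu))
    · exact Or.inr ((hker c).mp (isUnit_iff.mp hu))

variable (hT2 : ∀ (a : H) (b₁ b₂ : ZeroSumMonoid G), θ a = b₁ * b₂ →
      ∃ a₁ a₂ : H, a = a₁ * a₂ ∧ θ a₁ = b₁ ∧ θ a₂ = b₂)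

include hT2

lemma theta_irred {a : H} (h : Irreducible a) : Irreducible (θ a) := by
  constructor
  · intro hc
    exact h.not_isUnit ((hker a).mp (isUnit_iff.mp hc))
  · intro b c hbc
    obtain ⟨a₁, a₂, rfl, h1, h2⟩ := hT2 a b c hbc
    rcases h.isUnit_or_isUnit rfl with hu | hu
    · exact Or.inl (h1 ▸ theta_unit θ hker hu ▸ isUnit_one)
    · exact Or.inr (h2 ▸ theta_unit θ hker hu ▸ isUnit_one)

lemma lift_list (M : List (ZeroSumMonoid G)) :
    ∀ a : H, θ a = M.prod →
      ∃ (ε : Hˣ) (L : List H), L.map θ = M ∧ a = ε * L.prod := by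
  induction M with
  | nil =>
    intro a h
    have : IsUnit a := (hker a).mp (by simpa using h)
    exact ⟨this.unit, [], by simp, by simp [IsUnit.unit_spec]⟩
  | cons b M ih =>
    intro a h
    rw [List.prod_cons] at h
    obtain ⟨a₁, a₂, rfl, h1, h2⟩ := hT2 a b M.prod h
    obtain ⟨ε, L, hL1, hL2⟩ := ih a₂ h2
    refine ⟨1, (a₁ * ε) :: L, ?_, ?_⟩
    · rw [List.map_cons, hL1, map_mul, h1, theta_unit θ hker ε.isUnit, mul_one]
    · rw [Units.val_one, one_mul, List.prod_cons, hL2, mul_assoc]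

lemma lengthSet_theta (a : H) : LengthSet a = LengthSet (θ a) := by
  ext n
  constructor
  · rintro ⟨ε, L, h1, h2, rfl⟩
    refine ⟨1, L.map θ, by simp [h1], ?_, ?_⟩
    · intro x hx
      obtain ⟨y, hy, rfl⟩ := List.mem_map.mp hx
      exact theta_irred θ hker hT2 (h2 y hy)
    · rw [Units.val_one, one_mul, map_mul, theta_unit θ hker ε.isUnit, one_mul,
        map_list_prod]
  · rintro ⟨ε, M, h1, h2, h3⟩
    rw [unit_eq_one ε, one_mul] at h3
    obtain ⟨ε', L, hL1, hL2⟩ := lift_list θ hker hT2 M a h3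
    refine ⟨ε', L, ?_, ?_, hL2⟩
    · rw [← h1, ← hL1, List.length_map]
    · intro x hx
      apply irred_of_theta θ hker
      apply h2
      rw [← hL1]
      exact List.mem_map_of_mem hx

end Transfer

end ZS

/-- If `G` is a finite abelian group and the cancellative monoid `H` admits a transfer
homomorphism `θ : H → B(G)` onto the monoid of zero-sum sequences over `G`, then `H` is
half-factorial if and only if `|G| ≤ 2`. -/
theorem stmt9 {H : Type*} [CancelMonoid H] {G : Type*} [AddCommGroup G] [Fintype G]
    (θ : H →* ZeroSumMonoid G)
    (hsurj : Function.Surjective θ)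
    (hker : ∀ a : H, θ a = 1 ↔ IsUnit a)
    (hT2 : ∀ (a : H) (b₁ b₂ : ZeroSumMonoid G), θ a = b₁ * b₂ →
      ∃ a₁ a₂ : H, a = a₁ * a₂ ∧ θ a₁ = b₁ ∧ θ a₂ = b₂) :
    (∀ a : H, ∃ n : ℕ, LengthSet a = {n}) ↔ Fintype.card G ≤ 2 := by
  constructor
  · intro hHF
    by_contra hcard
    push_neg at hcard
    obtain ⟨s, n₁, n₂, hne, h1, h2⟩ := ZS.B_not_HF hcard
    obtain ⟨a, rfl⟩ := hsurj s
    obtain ⟨n, hn⟩ := hHF a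
    rw [ZS.lengthSet_theta θ hker hT2 a] at hn
    rw [hn] at h1 h2
    exact hne (h1.trans h2.symm)
  · intro hcard a
    rw [ZS.lengthSet_theta θ hker hT2 a]
    exact ZS.B_half_factorial hcard (θ a)
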